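/- For any two pre-Hilbert spaces X₀ and X₁, the orthogonal direct sum X₀ ⊕ X₁ has an orthonormal basis if and only if both X₀ and X₁ have orthonormal bases. Equivalently, X₀ ⊕ X₁ is pathological (has no orthonormal basis) iff at least one of X₀, X₁ is pathological. -/

import Mathlib

noncomputable section
open scoped InnerProductSpace ENNReal

/-- An orthonormal subset of an inner product space. -/
def OrthSet (k : Type*) {E : Type*} [RCLike k] [NormedAddCommGroup E]
    [InnerProductSpace k E] (B : Set E) : Prop :=
  Orthonormal k ((↑) : B → E)

/-- A maximal orthonormal system of the whole space. -/
def MaximalOrthSet (k : Type*) {E : Type*} [RCLike k] [NormedAddCommGroup E]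
    [InnerProductSpace k E] (B : Set E) : Prop :=
  OrthSet k B ∧ ∀ C : Set E, B ⊆ C → OrthSet k C → C = B

/-- An orthonormal basis (as a set): an orthonormal system whose linear span is dense. -/
def IsOrthBasisSet (k : Type*) {E : Type*} [RCLike k] [NormedAddCommGroup E]
    [InnerProductSpace k E] (B : Set E) : Prop :=
  OrthSet k B ∧ Dense (Submodule.span k B : Set E)

/-- The space has an orthonormal basis (is non-pathological). -/
def HasOrthBasis (k E : Type*) [RCLike k] [NormedAddCommGroup E]
    [InnerProductSpace k E] : Prop :=
  ∃ B : Set E, IsOrthBasisSet k B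

/-- Density: least cardinality of a dense subset. -/
def densityCard (E : Type*) [TopologicalSpace E] : Cardinal :=
  sInf { c | ∃ D : Set E, Dense D ∧ Cardinal.mk D = c }

open Set Submodule

section Aux

lemma countable_reflTransGen {α : Type*} {r : α → α → Prop}
    (h : ∀ x, {y | r x y}.Countable) (x : α) :
    {y | Relation.ReflTransGen r x y}.Countable := by
  let S : ℕ → Set α := fun n => Nat.rec {x} (fun _ s => ⋃ z ∈ s, {y | r z y}) n
  have hS : ∀ n, (S n).Countable := by
    intro n; induction n with
    | zero => exact Set.countable_singleton x
    | succ n ih => exact Set.Countable.biUnion ih (fun z _ => h z)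
  have hsub : {y | Relation.ReflTransGen r x y} ⊆ ⋃ n, S n := by
    intro y hy
    induction hy with
    | refl => exact Set.mem_iUnion.2 ⟨0, rfl⟩
    | tail _ hr ih =>
      obtain ⟨n, hn⟩ := Set.mem_iUnion.1 ih
      exact Set.mem_iUnion.2 ⟨n + 1, Set.mem_biUnion hn hr⟩
  exact (Set.countable_iUnion hS).mono hsub

open Classical in
/-- A canonical enumeration of a countable nonempty set. -/
noncomputable def famOf {α : Type*} (s : Set α) (d : α) : ℕ → α :=
  if h : s.Countable ∧ s.Nonempty then (h.1.exists_eq_range h.2).choose else fun _ => d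

lemma famOf_spec {α : Type*} {s : Set α} (d : α) (hc : s.Countable) (hn : s.Nonempty) :
    s = Set.range (famOf s d) := by
  rw [famOf, dif_pos (⟨hc, hn⟩ : s.Countable ∧ s.Nonempty)]
  exact Exists.choose_spec ((⟨hc, hn⟩ : s.Countable ∧ s.Nonempty).1.exists_eq_range
    (⟨hc, hn⟩ : s.Countable ∧ s.Nonempty).2)

variable {k : Type*} [RCLike k] {H E : Type*}
  [NormedAddCommGroup H] [InnerProductSpace k H]
  [NormedAddCommGroup E] [InnerProductSpace k E]

lemma hasOrthBasis_of_proj (T : H →ₗ[k] E) (S : E →ₗ[k] H)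
    (hadj : ∀ (x : H) (e : E), (inner k (T x) e : k) = inner k x (S e))
    (hTS : ∀ e, T (S e) = e)
    (hnorm : ∀ x : H, ‖T x‖ ≤ ‖x‖)
    (h : HasOrthBasis k H) : HasOrthBasis k E := by
  classical
  obtain ⟨B, hON, hdense⟩ := h
  rw [OrthSet] at hON
  set u : B → E := fun b => T (b : H) with hu
  set r : B → B → Prop := fun b b' => (inner k (u b) (u b') : k) ≠ 0 with hr
  have hrsymm : Symmetric r := by
    intro b b' hbb' h0
    exact hbb' (by rw [← inner_conj_symm, h0, map_zero])
  have hcount : ∀ b : B, {b' | r b b'}.Countable := by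
    intro b
    have hsum := hON.inner_products_summable (x := S (u b))
    refine hsum.countable_support.mono ?_
    intro b' hb'
    have h1 : (inner k ((b' : H)) (S (u b)) : k) = inner k (u b') (u b) := (hadj (b' : H) (u b)).symm
    have h2 : (inner k (u b') (u b) : k) ≠ 0 := hrsymm hb'
    simp only [Function.mem_support]
    rw [h1]
    simpa using h2
  set cl : B → Set B := fun b => {b' | Relation.ReflTransGen r b b'} with hcl
  have hclmem : ∀ b, b ∈ cl b := fun b => Relation.ReflTransGen.refl
  have hcleq : ∀ {b b' : B}, b' ∈ cl b → cl b' = cl b := by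
    intro b b' hb'
    apply Set.eq_of_subset_of_subset
    · intro y hy; exact Relation.ReflTransGen.trans hb' hy
    · intro y hy
      exact Relation.ReflTransGen.trans (by haveI : Std.Symm r := ⟨fun _ _ h => hrsymm h⟩; exact Std.Symm.symm _ _ hb') hy
  have hclcount : ∀ b, (cl b).Countable := countable_reflTransGen hcount
  set sOf : B → Set E := fun b => insert (0 : E) (u '' cl b) with hsOf
  have hsc : ∀ b, (sOf b).Countable := fun b => ((hclcount b).image u).insert 0
  have hsn : ∀ b, (sOf b).Nonempty := fun b => ⟨0, Set.mem_insert _ _⟩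
  set g : B → ℕ → E := fun b => InnerProductSpace.gramSchmidtNormed k (famOf (sOf b) 0) with hg
  have hrange : ∀ b, Set.range (famOf (sOf b) 0) = sOf b :=
    fun b => (famOf_spec 0 (hsc b) (hsn b)).symm
  have hspan : ∀ b, span k (Set.range (g b)) = span k (u '' cl b) := by
    intro b
    rw [hg]
    rw [InnerProductSpace.span_gramSchmidtNormed_range, InnerProductSpace.span_gramSchmidt, hrange, hsOf, Submodule.span_insert_zero]
  have hgeq : ∀ {b b' : B}, b' ∈ cl b → g b' = g b := by
    intro b b' hb'
    have : cl b' = cl b := hcleq hb'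
    simp only [hg, hsOf, this]
  -- cross-class orthogonality
  have hcross : ∀ {b b' : B}, b' ∉ cl b →
      ∀ x ∈ span k (u '' cl b), ∀ y ∈ span k (u '' cl b'), (inner k x y : k) = 0 := by
    intro b b' hb'
    have horth : span k (u '' cl b) ⟂ span k (u '' cl b') := by
      rw [Submodule.isOrtho_span]
      rintro x ⟨p, hp, rfl⟩ y ⟨q, hq, rfl⟩
      by_contra hne
      have hrpq : r p q := hne
      have hq1 : q ∈ cl b := Relation.ReflTransGen.tail hp hrpq
      have : cl q = cl b := hcleq hq1
      have : cl q = cl b' := hcleq hq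
      exact hb' (by rw [← hcleq hq1, hcleq hq]; exact hclmem b')
    intro x hx y hy
    exact horth.inner_eq hx hy
  set C : Set E := ⋃ b : B, (Set.range (g b) \ {0}) with hC
  have hmemspan : ∀ {b : B} {x : E}, x ∈ Set.range (g b) → x ∈ span k (u '' cl b) := by
    intro b x hx
    rw [← hspan b]
    exact subset_span hx
  -- orthonormality
  have hCON : OrthSet k C := by
    rw [OrthSet, orthonormal_subtype_iff_ite]
    intro x hx y hy
    rw [hC] at hx hy
    obtain ⟨b₁, hx⟩ := Set.mem_iUnion.1 hx
    obtain ⟨b₂, hy⟩ := Set.mem_iUnion.1 hy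
    obtain ⟨⟨i, hxi⟩, hx0⟩ := hx
    obtain ⟨⟨j, hyj⟩, hy0⟩ := hy
    simp only [Set.mem_singleton_iff] at hx0 hy0
    by_cases hcls : b₂ ∈ cl b₁
    · have hgg : g b₂ = g b₁ := hgeq hcls
      rw [hgg] at hyj
      have hxi' : InnerProductSpace.gramSchmidtNormed k (famOf (sOf b₁) 0) i = x := hxi
      have hyj' : InnerProductSpace.gramSchmidtNormed k (famOf (sOf b₁) 0) j = y := hyj
      have hx0' : InnerProductSpace.gramSchmidtNormed k (famOf (sOf b₁) 0) i ≠ 0 := by rw [hxi']; exact hx0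
      have hy0' : InnerProductSpace.gramSchmidtNormed k (famOf (sOf b₁) 0) j ≠ 0 := by rw [hyj']; exact hy0
      by_cases hxy : x = y
      · rw [if_pos hxy, ← hxy]
        have hn1 : ‖InnerProductSpace.gramSchmidtNormed k (famOf (sOf b₁) 0) i‖ = 1 :=
          InnerProductSpace.gramSchmidtNormed_unit_length' hx0'
        rw [hxi'] at hn1
        rw [inner_self_eq_norm_sq_to_K, hn1]
        norm_num
      · rw [if_neg hxy]
        have hij : i ≠ j := by
          intro hij; rw [hij, hyj'] at hxi'; exact hxy hxi'.symm
        have horth' := InnerProductSpace.gramSchmidtNormed_orthonormal' (𝕜 := k) (famOf (sOf b₁) 0)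
        have h0 := horth'.2 (i := ⟨i, hx0'⟩) (j := ⟨j, hy0'⟩)
          (by simpa using hij)
        simpa only [hxi', hyj'] using h0
    · have hxy : (inner k x y : k) = 0 := by
        refine hcross hcls x (hmemspan ⟨i, hxi⟩) y ?_
        exact hmemspan ⟨j, hyj⟩
      have hne : x ≠ y := by
        intro hxyeq
        apply hx0
        rw [hxyeq] at hxy ⊢
        exact inner_self_eq_zero.1 hxy
      rw [if_neg hne]
      exact hxy
  -- density
  have huspan : ∀ b : B, u b ∈ span k C := by
    intro b
    have h1 : u b ∈ span k (Set.range (g b)) := by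
      rw [hspan b]
      exact subset_span ⟨b, hclmem b, rfl⟩
    have h2 : span k (Set.range (g b)) ≤ span k (Set.range (g b) \ {0}) := by
      have hins : span k (insert (0 : E) (Set.range (g b) \ {0}))
          = span k (Set.range (g b) \ {0}) := Submodule.span_insert_zero
      rw [← hins]
      apply Submodule.span_mono
      intro z hz
      by_cases hz0 : z = 0
      · exact Set.mem_insert_iff.2 (Or.inl hz0)
      · exact Set.mem_insert_iff.2 (Or.inr ⟨hz, hz0⟩)
    have h3 : span k (Set.range (g b) \ {0}) ≤ span k C :=
      Submodule.span_mono (Set.subset_iUnion (fun b : B => Set.range (g b) \ {0}) b)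
    exact h3 (h2 h1)
  have hCdense : Dense ((span k C : Submodule k E) : Set E) := by
    rw [Metric.dense_iff]
    intro e ε hε
    have := (Metric.dense_iff.1 hdense) (S e) ε hε
    obtain ⟨z, hzball, hzspan⟩ := this
    refine ⟨T z, ?_, ?_⟩
    · rw [Metric.mem_ball, dist_eq_norm] at hzball ⊢
      calc ‖T z - e‖ = ‖T (z - S e)‖ := by rw [map_sub, hTS]
        _ ≤ ‖z - S e‖ := hnorm _
        _ < ε := hzball
    · have h1 : T z ∈ Submodule.map T (span k B) := Submodule.mem_map_of_mem hzspan
      rw [Submodule.map_span] at h1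
      have h2 : T '' B ⊆ (span k C : Set E) := by
        rintro _ ⟨b, hb, rfl⟩
        exact huspan ⟨b, hb⟩
      exact Submodule.span_le.2 h2 h1
  exact ⟨C, hCON, hCdense⟩

end Aux


/-- the orthogonal direct sum `X₀ ⊕ X₁` has an orthonormal basis iff
both `X₀` and `X₁` do. -/
theorem stmt11 {k : Type*} [RCLike k] {E F : Type*}
    [NormedAddCommGroup E] [InnerProductSpace k E]
    [NormedAddCommGroup F] [InnerProductSpace k F] :
    HasOrthBasis k (WithLp 2 (E × F)) ↔ (HasOrthBasis k E ∧ HasOrthBasis k F) := by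
  classical
  constructor
  · intro h
    constructor
    · refine hasOrthBasis_of_proj
        ((LinearMap.fst k E F).comp (WithLp.linearEquiv 2 k (E × F)).toLinearMap)
        ((WithLp.linearEquiv 2 k (E × F)).symm.toLinearMap.comp (LinearMap.inl k E F))
        ?_ (fun e => rfl) ?_ h
      · intro x e
        simp [WithLp.prod_inner_apply]
      · intro x
        have h2 : ‖x.fst‖ ^ 2 ≤ ‖x‖ ^ 2 := by
          rw [WithLp.prod_norm_sq_eq_of_L2]
          exact le_add_of_nonneg_right (sq_nonneg _)
        have h3 : ‖x.fst‖ ≤ ‖x‖ :=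
          (pow_le_pow_iff_left₀ (norm_nonneg _) (norm_nonneg _) two_ne_zero).1 h2
        exact h3
    · refine hasOrthBasis_of_proj
        ((LinearMap.snd k E F).comp (WithLp.linearEquiv 2 k (E × F)).toLinearMap)
        ((WithLp.linearEquiv 2 k (E × F)).symm.toLinearMap.comp (LinearMap.inr k E F))
        ?_ (fun e => rfl) ?_ h
      · intro x e
        simp [WithLp.prod_inner_apply]
      · intro x
        have h2 : ‖x.snd‖ ^ 2 ≤ ‖x‖ ^ 2 := by
          rw [WithLp.prod_norm_sq_eq_of_L2]
          exact le_add_of_nonneg_left (sq_nonneg _)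
        exact (pow_le_pow_iff_left₀ (norm_nonneg _) (norm_nonneg _) two_ne_zero).1 h2
  · rintro ⟨⟨B0, h0on, h0d⟩, ⟨B1, h1on, h1d⟩⟩
    set S0 : E →ₗ[k] WithLp 2 (E × F) :=
      (WithLp.linearEquiv 2 k (E × F)).symm.toLinearMap.comp (LinearMap.inl k E F) with hS0
    set S1 : F →ₗ[k] WithLp 2 (E × F) :=
      (WithLp.linearEquiv 2 k (E × F)).symm.toLinearMap.comp (LinearMap.inr k E F) with hS1
    have hS0fst : ∀ a : E, (S0 a).fst = a := fun a => rfl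
    have hS0snd : ∀ a : E, (S0 a).snd = 0 := fun a => rfl
    have hS1fst : ∀ a : F, (S1 a).fst = 0 := fun a => rfl
    have hS1snd : ∀ a : F, (S1 a).snd = a := fun a => rfl
    rw [OrthSet] at h0on h1on
    have h0ne : ∀ a ∈ B0, a ≠ (0 : E) := fun a ha => h0on.ne_zero ⟨a, ha⟩
    have h1ne : ∀ a ∈ B1, a ≠ (0 : F) := fun a ha => h1on.ne_zero ⟨a, ha⟩
    have h0ite := orthonormal_subtype_iff_ite.1 h0on
    have h1ite := orthonormal_subtype_iff_ite.1 h1on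
    refine ⟨S0 '' B0 ∪ S1 '' B1, ?_, ?_⟩
    · rw [OrthSet, orthonormal_subtype_iff_ite]
      rintro v (⟨a, ha, rfl⟩ | ⟨a, ha, rfl⟩) w (⟨b, hb, rfl⟩ | ⟨b, hb, rfl⟩)
      · have hiff : S0 a = S0 b ↔ a = b := by
          constructor
          · intro hab
            have := congrArg (fun z : WithLp 2 (E × F) => z.fst) hab
            simpa [hS0fst] using this
          · intro hab; rw [hab]
        have hval : (inner k (S0 a) (S0 b) : k) = inner k a b := by
          rw [WithLp.prod_inner_apply]
          simp only [WithLp.ofLp_fst, WithLp.ofLp_snd]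
          rw [hS0fst, hS0fst, hS0snd, hS0snd]
          simp
        rw [hval, h0ite a ha b hb]
        by_cases hab : a = b
        · rw [if_pos hab, if_pos (hiff.2 hab)]
        · rw [if_neg hab, if_neg (fun h => hab (hiff.1 h))]
      · have hne : S0 a ≠ S1 b := by
          intro hab
          have := congrArg (fun z : WithLp 2 (E × F) => z.fst) hab
          simp only [hS0fst, hS1fst] at this
          exact h0ne a ha this
        rw [if_neg hne, WithLp.prod_inner_apply]
        simp only [WithLp.ofLp_fst, WithLp.ofLp_snd]
        rw [hS0snd, hS1fst]
        simp
      · have hne : S1 a ≠ S0 b := by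
          intro hab
          have := congrArg (fun z : WithLp 2 (E × F) => z.snd) hab
          simp only [hS1snd, hS0snd] at this
          exact h1ne a ha this
        rw [if_neg hne, WithLp.prod_inner_apply]
        simp only [WithLp.ofLp_fst, WithLp.ofLp_snd]
        rw [hS1fst, hS0snd]
        simp
      · have hiff : S1 a = S1 b ↔ a = b := by
          constructor
          · intro hab
            have := congrArg (fun z : WithLp 2 (E × F) => z.snd) hab
            simpa [hS1snd] using this
          · intro hab; rw [hab]
        have hval : (inner k (S1 a) (S1 b) : k) = inner k a b := by
          rw [WithLp.prod_inner_apply]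
          simp only [WithLp.ofLp_fst, WithLp.ofLp_snd]
          rw [hS1fst, hS1fst, hS1snd, hS1snd]
          simp
        rw [hval, h1ite a ha b hb]
        by_cases hab : a = b
        · rw [if_pos hab, if_pos (hiff.2 hab)]
        · rw [if_neg hab, if_neg (fun h => hab (hiff.1 h))]
    · rw [Metric.dense_iff]
      intro x ε hε
      obtain ⟨z0, hz0b, hz0s⟩ := Metric.dense_iff.1 h0d x.fst (ε / 2) (by positivity)
      obtain ⟨z1, hz1b, hz1s⟩ := Metric.dense_iff.1 h1d x.snd (ε / 2) (by positivity)
      rw [Metric.mem_ball, dist_eq_norm] at hz0b hz1b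
      refine ⟨S0 z0 + S1 z1, ?_, ?_⟩
      · rw [Metric.mem_ball, dist_eq_norm]
        have hfst : (S0 z0 + S1 z1 - x).fst = z0 - x.fst := by
          rw [WithLp.sub_fst, WithLp.add_fst, hS0fst, hS1fst, add_zero]
        have hsnd : (S0 z0 + S1 z1 - x).snd = z1 - x.snd := by
          rw [WithLp.sub_snd, WithLp.add_snd, hS0snd, hS1snd, zero_add]
        have hsq : ‖S0 z0 + S1 z1 - x‖ ^ 2 < ε ^ 2 := by
          rw [WithLp.prod_norm_sq_eq_of_L2, hfst, hsnd]
          nlinarith [norm_nonneg (z0 - x.fst), norm_nonneg (z1 - x.snd)]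
        exact lt_of_pow_lt_pow_left₀ 2 (le_of_lt hε) hsq
      · have m0 : S0 z0 ∈ span k (S0 '' B0 ∪ S1 '' B1) := by
          have h1 : S0 z0 ∈ Submodule.map S0 (span k B0) := Submodule.mem_map_of_mem hz0s
          rw [Submodule.map_span] at h1
          exact span_mono Set.subset_union_left h1
        have m1 : S1 z1 ∈ span k (S0 '' B0 ∪ S1 '' B1) := by
          have h1 : S1 z1 ∈ Submodule.map S1 (span k B1) := Submodule.mem_map_of_mem hz1s
          rw [Submodule.map_span] at h1
          exact span_mono Set.subset_union_right h1
        exact Submodule.add_mem _ m0 m1
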